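/- Let X ∈ ℝ^{m×n} and Z ∈ ℝ^{m×n}. A nearest point (in Frobenius norm) to Z in the set ℝ^{m×m}X ∪ Xℝ^{n×n} is XX†Z if ‖XX†Z‖ ≥ ‖ZX†X‖ and ZX†X otherwise, where X† is the Moore–Penrose inverse. -/
import Mathlib

open Matrix

attribute [local instance] Matrix.frobeniusNormedAddCommGroup Matrix.frobeniusNormedSpace

abbrev Mat (m n : ℕ) := Matrix (Fin m) (Fin n) ℝ

lemma normsq {m n : ℕ} (M : Mat m n) : ‖M‖ ^ 2 = Matrix.trace (Mᵀ * M) := by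
  rw [Matrix.frobenius_norm_def, ← Real.rpow_natCast _ 2, ← Real.rpow_mul (by positivity)]
  norm_num
  simp [Matrix.trace, Matrix.mul_apply, Matrix.diag, Real.norm_eq_abs, sq_abs, pow_two]
  rw [Finset.sum_comm]

lemma pyth {m n : ℕ} (A B : Mat m n) (h : Matrix.trace (Bᵀ * A) = 0) :
    ‖A + B‖ ^ 2 = ‖A‖ ^ 2 + ‖B‖ ^ 2 := by
  have h2 : Matrix.trace (Aᵀ * B) = 0 := by
    rw [← Matrix.trace_transpose, Matrix.transpose_mul, Matrix.transpose_transpose, h]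
  simp only [normsq, Matrix.transpose_add, Matrix.add_mul, Matrix.mul_add,
    Matrix.trace_add, h, h2]
  ring

lemma proj_left {m n : ℕ} (P : Matrix (Fin m) (Fin m) ℝ) (hPP : P * P = P) (hPt : Pᵀ = P)
    (Z V : Mat m n) (hV : P * V = V) :
    ‖Z - P * Z‖ ^ 2 + ‖P * Z - V‖ ^ 2 = ‖Z - V‖ ^ 2 := by
  have cross : Matrix.trace ((P * Z - V)ᵀ * (Z - P * Z)) = 0 := by
    have hD : P * (P * Z - V) = P * Z - V := by
      rw [Matrix.mul_sub, ← Matrix.mul_assoc, hPP, hV]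
    calc Matrix.trace ((P * Z - V)ᵀ * (Z - P * Z))
        = Matrix.trace ((P * (P * Z - V))ᵀ * (Z - P * Z)) := by rw [hD]
      _ = Matrix.trace ((P * Z - V)ᵀ * (P * (Z - P * Z))) := by
          rw [Matrix.transpose_mul, hPt, Matrix.mul_assoc]
      _ = 0 := by rw [Matrix.mul_sub, ← Matrix.mul_assoc P P Z, hPP]; simp
  have h := pyth (Z - P * Z) (P * Z - V) cross
  rw [sub_add_sub_cancel] at h
  linarith

lemma proj_right {m n : ℕ} (Q : Matrix (Fin n) (Fin n) ℝ) (hQQ : Q * Q = Q) (hQt : Qᵀ = Q)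
    (Z V : Mat m n) (hV : V * Q = V) :
    ‖Z - Z * Q‖ ^ 2 + ‖Z * Q - V‖ ^ 2 = ‖Z - V‖ ^ 2 := by
  have cross : Matrix.trace ((Z * Q - V)ᵀ * (Z - Z * Q)) = 0 := by
    have hD : (Z * Q - V) * Q = Z * Q - V := by
      rw [Matrix.sub_mul, Matrix.mul_assoc, hQQ, hV]
    calc Matrix.trace ((Z * Q - V)ᵀ * (Z - Z * Q))
        = Matrix.trace (((Z * Q - V) * Q)ᵀ * (Z - Z * Q)) := by rw [hD]
      _ = Matrix.trace (Q * ((Z * Q - V)ᵀ * (Z - Z * Q))) := by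
          rw [Matrix.transpose_mul, hQt, Matrix.mul_assoc]
      _ = Matrix.trace ((Z * Q - V)ᵀ * ((Z - Z * Q) * Q)) := by
          rw [← Matrix.mul_assoc ((Z * Q - V)ᵀ), Matrix.trace_mul_cycle, Matrix.mul_assoc]
      _ = 0 := by rw [Matrix.sub_mul, Matrix.mul_assoc Z Q Q, hQQ]; simp
  have h := pyth (Z - Z * Q) (Z * Q - V) cross
  rw [sub_add_sub_cancel] at h
  linarith

lemma sq_le_norm {a b : ℝ} (ha : 0 ≤ a) (hb : 0 ≤ b) (h : a ^ 2 ≤ b ^ 2) : a ≤ b := by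
  nlinarith

/-- Frobenius inner product `⟨X, Y⟩ = tr (Yᵀ X)`. -/
noncomputable def froInner {m n : ℕ} (X Y : Mat m n) : ℝ := Matrix.trace (Yᵀ * X)

/-- A cone: closed under multiplication by nonnegative scalars. -/
def IsConeSet {m n : ℕ} (C : Set (Mat m n)) : Prop :=
  ∀ Y ∈ C, ∀ a : ℝ, 0 ≤ a → a • Y ∈ C

/-- The set of projections (nearest points in Frobenius norm) of `X` onto `C`. -/
noncomputable def projSet {m n : ℕ} (C : Set (Mat m n)) (X : Mat m n) : Set (Mat m n) :=
  {Y | Y ∈ C ∧ ∀ Z ∈ C, ‖X - Y‖ ≤ ‖X - Z‖}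

/-- Frobenius distance from `X` to the set `C`. -/
noncomputable def distTo {m n : ℕ} (C : Set (Mat m n)) (X : Mat m n) : ℝ :=
  sInf ((fun Z => ‖X - Z‖) '' C)

/-- The polar cone of `C`. -/
def polarCone {m n : ℕ} (C : Set (Mat m n)) : Set (Mat m n) :=
  {Y | ∀ X ∈ C, froInner X Y ≤ 0}


theorem stmt12 {m n : ℕ} (X : Mat m n) (Xd : Matrix (Fin n) (Fin m) ℝ)
    (h1 : X * Xd * X = X) (h2 : Xd * X * Xd = Xd)
    (h3 : (X * Xd)ᵀ = X * Xd) (h4 : (Xd * X)ᵀ = Xd * X) (Z : Mat m n) :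
    (‖X * Xd * Z‖ ≥ ‖Z * (Xd * X)‖ →
      X * Xd * Z ∈ projSet
        ({W | ∃ A : Matrix (Fin m) (Fin m) ℝ, W = A * X} ∪
         {W | ∃ B : Matrix (Fin n) (Fin n) ℝ, W = X * B}) Z) ∧
    (‖X * Xd * Z‖ < ‖Z * (Xd * X)‖ →
      Z * (Xd * X) ∈ projSet
        ({W | ∃ A : Matrix (Fin m) (Fin m) ℝ, W = A * X} ∪
         {W | ∃ B : Matrix (Fin n) (Fin n) ℝ, W = X * B}) Z) := by
  have hPP : (X * Xd) * (X * Xd) = X * Xd := by rw [← Matrix.mul_assoc, h1]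
  have hQQ : (Xd * X) * (Xd * X) = Xd * X := by rw [← Matrix.mul_assoc, h2]
  -- decompositions
  have leftEq : ∀ V : Mat m n, X * Xd * V = V →
      ‖Z - X * Xd * Z‖ ^ 2 + ‖X * Xd * Z - V‖ ^ 2 = ‖Z - V‖ ^ 2 := by
    intro V hV
    have := proj_left (X * Xd) hPP h3 Z V hV
    simpa [Matrix.mul_assoc] using this
  have rightEq : ∀ V : Mat m n, V * (Xd * X) = V →
      ‖Z - Z * (Xd * X)‖ ^ 2 + ‖Z * (Xd * X) - V‖ ^ 2 = ‖Z - V‖ ^ 2 :=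
    fun V hV => proj_right (Xd * X) hQQ h4 Z V hV
  have nL : ‖Z - X * Xd * Z‖ ^ 2 = ‖Z‖ ^ 2 - ‖X * Xd * Z‖ ^ 2 := by
    have h0 := leftEq 0 (by simp)
    simp only [sub_zero] at h0
    linarith
  have nR : ‖Z - Z * (Xd * X)‖ ^ 2 = ‖Z‖ ^ 2 - ‖Z * (Xd * X)‖ ^ 2 := by
    have h0 := rightEq 0 (by simp)
    simp only [sub_zero] at h0
    linarith
  -- invariance of members of each piece
  have memL : ∀ A : Matrix (Fin m) (Fin m) ℝ, (A * X) * (Xd * X) = A * X := by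
    intro A
    rw [Matrix.mul_assoc, ← Matrix.mul_assoc X Xd X, h1]
  have memR : ∀ B : Matrix (Fin n) (Fin n) ℝ, X * Xd * (X * B) = X * B := by
    intro B
    rw [← Matrix.mul_assoc, h1]
  constructor
  · intro hge
    refine ⟨Or.inr ⟨Xd * Z, Matrix.mul_assoc X Xd Z⟩, ?_⟩
    rintro W (⟨A, rfl⟩ | ⟨B, rfl⟩)
    · have e := rightEq (A * X) (memL A)
      have hsq : ‖Z * (Xd * X)‖ ^ 2 ≤ ‖X * Xd * Z‖ ^ 2 := by
        have := norm_nonneg (Z * (Xd * X)); nlinarith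
      refine sq_le_norm (norm_nonneg _) (norm_nonneg _) ?_
      nlinarith [sq_nonneg ‖Z * (Xd * X) - A * X‖]
    · have e := leftEq (X * B) (memR B)
      refine sq_le_norm (norm_nonneg _) (norm_nonneg _) ?_
      nlinarith [sq_nonneg ‖X * Xd * Z - X * B‖]
  · intro hlt
    refine ⟨Or.inl ⟨Z * Xd, (Matrix.mul_assoc Z Xd X).symm⟩, ?_⟩
    rintro W (⟨A, rfl⟩ | ⟨B, rfl⟩)
    · have e := rightEq (A * X) (memL A)
      refine sq_le_norm (norm_nonneg _) (norm_nonneg _) ?_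
      nlinarith [sq_nonneg ‖Z * (Xd * X) - A * X‖]
    · have e := leftEq (X * B) (memR B)
      have hsq : ‖X * Xd * Z‖ ^ 2 ≤ ‖Z * (Xd * X)‖ ^ 2 := by
        have := norm_nonneg (X * Xd * Z); nlinarith
      refine sq_le_norm (norm_nonneg _) (norm_nonneg _) ?_
      nlinarith [sq_nonneg ‖X * Xd * Z - X * B‖]
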